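/- Let b ∈ (0,1/2) and Ψ↓(z) = (1/π) Γ(1+2b-z) Γ(1-b+z) [cos(πb) - cos(πz - πb)]. Then Ψ↓(0) = 0, Ψ↓ is analytic on a neighbourhood of 0, and (Ψ↓)'(0) < 0. -/

import Mathlib

open Real

lemma analyticAt_of_complex_re {f : ℂ → ℂ} {s : Set ℂ} (hs : IsOpen s)
    (hf : DifferentiableOn ℂ f s) {x : ℝ} (hx : (x : ℂ) ∈ s) (g : ℝ → ℝ)
    (hg : ∀ y : ℝ, g y = (f y).re) : AnalyticAt ℝ g x := by
  have hA : AnalyticAt ℂ f x := hf.analyticAt (hs.mem_nhds hx)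
  have h1 : AnalyticAt ℝ f (x : ℂ) := hA.restrictScalars
  have h2 : AnalyticAt ℝ (fun y : ℝ => (f y).re) x := by
    have hof : AnalyticAt ℝ (fun y : ℝ => (y : ℂ)) x := Complex.ofRealCLM.analyticAt x
    have := ((Complex.reCLM.analyticAt (f x)).comp h1).comp hof
    exact this
  exact h2.congr (Filter.Eventually.of_forall fun y => (hg y).symm)

lemma analyticAt_realGamma {x : ℝ} (hx : 0 < x) : AnalyticAt ℝ Real.Gamma x := by
  refine analyticAt_of_complex_re (f := Complex.Gamma) (s := {z : ℂ | 0 < z.re})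
    (isOpen_lt continuous_const Complex.continuous_re) ?_ (by simpa using hx) _ ?_
  · intro z hz
    refine (Complex.differentiableAt_Gamma z fun m => ?_).differentiableWithinAt
    intro h
    rw [h] at hz
    simp only [Set.mem_setOf_eq, Complex.neg_re, Complex.natCast_re] at hz
    have : (0:ℝ) ≤ (m:ℝ) := Nat.cast_nonneg m
    linarith
  · intro y
    rw [Complex.Gamma_ofReal, Complex.ofReal_re]

lemma analyticAt_realCos (x : ℝ) : AnalyticAt ℝ Real.cos x := by
  refine analyticAt_of_complex_re (f := Complex.cos) (s := Set.univ) isOpen_univ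
    (Complex.differentiable_cos.differentiableOn) (Set.mem_univ _) _ ?_
  intro y
  rw [Complex.cos_ofReal_re]

/-- For `b ∈ (0,1/2)` and
`Ψ↓(z) = (1/π) Γ(1+2b-z) Γ(1-b+z) [cos(πb) - cos(πz - πb)]`, one has `Ψ↓(0) = 0`,
`Ψ↓` is (real-)analytic in a neighbourhood of `0`, and `(Ψ↓)'(0) < 0`. -/
theorem laplace_exponent_down_at_zero (b : ℝ) (hb : b ∈ Set.Ioo (0 : ℝ) (1 / 2))
    (Ψ : ℝ → ℝ)
    (hΨ : ∀ z : ℝ, Ψ z = (1 / π) * Real.Gamma (1 + 2 * b - z) * Real.Gamma (1 - b + z) *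
      (Real.cos (π * b) - Real.cos (π * z - π * b))) :
    Ψ 0 = 0 ∧ AnalyticAt ℝ Ψ 0 ∧ deriv Ψ 0 < 0 := by
  obtain ⟨hb0, hb1⟩ := hb
  have hΨfun : Ψ = fun z => (1 / π) * Real.Gamma (1 + 2 * b - z) * Real.Gamma (1 - b + z) *
      (Real.cos (π * b) - Real.cos (π * z - π * b)) := funext hΨ
  -- value at zero
  have h0 : Ψ 0 = 0 := by
    rw [hΨ]
    have : π * 0 - π * b = -(π * b) := by ring
    rw [this, Real.cos_neg]
    ring
  refine ⟨h0, ?_, ?_⟩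
  · -- analyticity
    rw [hΨfun]
    have hA1 : AnalyticAt ℝ (fun z : ℝ => Real.Gamma (1 + 2 * b - z)) 0 := by
      have h : AnalyticAt ℝ (fun z : ℝ => 1 + 2 * b - z) 0 :=
        analyticAt_const.sub analyticAt_id
      exact (analyticAt_realGamma (x := 1 + 2 * b - 0) (by linarith)).comp h
    have hA2 : AnalyticAt ℝ (fun z : ℝ => Real.Gamma (1 - b + z)) 0 := by
      have h : AnalyticAt ℝ (fun z : ℝ => 1 - b + z) 0 :=
        analyticAt_const.add analyticAt_id
      exact (analyticAt_realGamma (x := 1 - b + 0) (by linarith)).comp h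
    have hA3 : AnalyticAt ℝ (fun z : ℝ => Real.cos (π * b) - Real.cos (π * z - π * b)) 0 := by
      have h : AnalyticAt ℝ (fun z : ℝ => π * z - π * b) 0 :=
        (analyticAt_const.mul analyticAt_id).sub analyticAt_const
      exact analyticAt_const.sub ((analyticAt_realCos _).comp h)
    exact ((analyticAt_const.mul hA1).mul hA2).mul hA3
  · -- derivative
    set A : ℝ → ℝ := fun z => (1 / π) * Real.Gamma (1 + 2 * b - z) * Real.Gamma (1 - b + z)
      with hAdef
    set g : ℝ → ℝ := fun z => Real.cos (π * b) - Real.cos (π * z - π * b) with hgdef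
    have hA : AnalyticAt ℝ A 0 := by
      have hA1 : AnalyticAt ℝ (fun z : ℝ => Real.Gamma (1 + 2 * b - z)) 0 :=
        (analyticAt_realGamma (x := 1 + 2 * b - 0) (by linarith)).comp
          (analyticAt_const.sub analyticAt_id)
      have hA2 : AnalyticAt ℝ (fun z : ℝ => Real.Gamma (1 - b + z)) 0 :=
        (analyticAt_realGamma (x := 1 - b + 0) (by linarith)).comp
          (analyticAt_const.add analyticAt_id)
      exact (analyticAt_const.mul hA1).mul hA2
    have hdA : HasDerivAt A (deriv A 0) 0 := hA.differentiableAt.hasDerivAt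
    have hdg : HasDerivAt g (-(π * Real.sin (π * b))) 0 := by
      have hlin : HasDerivAt (fun z : ℝ => π * z - π * b) π 0 := by
        simpa using ((hasDerivAt_id (0:ℝ)).const_mul π).sub_const (π * b)
      have hcos : HasDerivAt (fun z : ℝ => Real.cos (π * z - π * b))
          (-Real.sin (π * 0 - π * b) * π) 0 := hlin.cos
      have := (hasDerivAt_const (0:ℝ) (Real.cos (π * b))).sub hcos
      refine HasDerivAt.congr_deriv this ?_
      rw [show π * (0:ℝ) - π * b = -(π * b) by ring, Real.sin_neg]
      ring
    have hΨd : HasDerivAt Ψ (deriv A 0 * g 0 + A 0 * (-(π * Real.sin (π * b)))) 0 := by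
      have := hdA.mul hdg
      rw [hΨfun]
      exact this
    have hg0 : g 0 = 0 := by
      simp only [hgdef, mul_zero, zero_sub, Real.cos_neg]
      ring
    have hd : deriv Ψ 0 = A 0 * (-(π * Real.sin (π * b))) := by
      rw [hΨd.deriv, hg0]; ring
    rw [hd]
    have hApos : 0 < A 0 := by
      have h1 : 0 < Real.Gamma (1 + 2 * b - 0) := Real.Gamma_pos_of_pos (by linarith)
      have h2 : 0 < Real.Gamma (1 - b + 0) := Real.Gamma_pos_of_pos (by linarith)
      have h3 : 0 < (1:ℝ) / π := by positivity
      exact mul_pos (mul_pos h3 h1) h2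
    have hsin : 0 < Real.sin (π * b) := by
      apply Real.sin_pos_of_pos_of_lt_pi
      · positivity
      · nlinarith [Real.pi_pos]
    nlinarith [mul_pos hApos (mul_pos Real.pi_pos hsin)]
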